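/- Weighted local-energy inequality (Eq. (15)): Let B ⊆ V with λ_B > 0, and suppose P_B satisfies the density-ratio condition with parameter b ∈ ℝ. Then for any measurable f with f(J) ≥ 0 and f(flip_B J) = f(J) for all J, one has E[ −f(J) J_B ⟨σ_B⟩_J ] ≥ E[ −f(J) J_B ( tanh(βλ_B J_B) + (1 − exp(−b J_B)) / sinh(2βλ_B J_B) ) ], where the function J_B ↦ (1 − exp(−b J_B))/sinh(2βλ_B J_B) is interpreted by its continuous extension b/(2βλ_B) at J_B = 0. -/

import Mathlib

open MeasureTheory Real
open scoped ENNReal NNReal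

variable {V : Type*}

/-- Spin value of a configuration at a site: `+1` or `-1`. -/
noncomputable def spin (σ : V → Bool) (i : V) : ℝ := if σ i then 1 else -1

/-- `σ_A = ∏_{i ∈ A} σ_i`. -/
noncomputable def sigmaA (A : Finset V) (σ : V → Bool) : ℝ := ∏ i ∈ A, spin σ i

/-- `β Σ_A λ_A J_A σ_A` (minus the Hamiltonian, times β). -/
noncomputable def energy [Fintype V] [DecidableEq V] (β : ℝ) (lam J : Finset V → ℝ)
    (σ : V → Bool) : ℝ := β * ∑ A : Finset V, lam A * J A * sigmaA A σ

/-- Partition function `Z_J`. -/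
noncomputable def Zfun [Fintype V] [DecidableEq V] (β : ℝ) (lam J : Finset V → ℝ) : ℝ :=
  ∑ σ : V → Bool, Real.exp (energy β lam J σ)

/-- Gibbs expectation `⟨σ_B⟩_J`. -/
noncomputable def corr [Fintype V] [DecidableEq V] (β : ℝ) (lam J : Finset V → ℝ)
    (B : Finset V) : ℝ :=
  (∑ σ : V → Bool, sigmaA B σ * Real.exp (energy β lam J σ)) / Zfun β lam J

/-- Gibbs expectation `⟨σ_B σ_C⟩_J`. -/
noncomputable def corr2 [Fintype V] [DecidableEq V] (β : ℝ) (lam J : Finset V → ℝ)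
    (B C : Finset V) : ℝ :=
  (∑ σ : V → Bool, sigmaA B σ * sigmaA C σ * Real.exp (energy β lam J σ)) / Zfun β lam J

/-- Negate the coupling indexed by `B`. -/
noncomputable def flipJ [DecidableEq V] (B : Finset V) (J : Finset V → ℝ) : Finset V → ℝ :=
  Function.update J B (-(J B))

/-- The density-ratio condition `P(-x) = exp(-2 b x) P(x)`: the pushforward of `P` under
negation equals the measure with density `x ↦ exp (-2 b x)` with respect to `P`. -/
def densityRatio (P : Measure ℝ) (b : ℝ) : Prop :=
  P.map (fun x => -x) = P.withDensity (fun x => ENNReal.ofReal (Real.exp (-2 * b * x)))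

/-- `(1 - exp (-b x)) / sinh (2 β λ_B x)`, extended continuously by `b / (2 β λ_B)` at `x = 0`. -/
noncomputable def phiExt (β lamB b x : ℝ) : ℝ :=
  if x = 0 then b / (2 * β * lamB)
  else (1 - Real.exp (-b * x)) / Real.sinh (2 * β * lamB * x)

theorem lintegral_fin_prod {n : ℕ} {E : Fin n → Type*} [∀ i, MeasurableSpace (E i)]
    (μ : ∀ i, Measure (E i)) [∀ i, SigmaFinite (μ i)] (h : ∀ i, E i → ℝ≥0∞)
    (hm : ∀ i, Measurable (h i)) :
    ∫⁻ x : ∀ i, E i, ∏ i, h i (x i) ∂Measure.pi μ = ∏ i, ∫⁻ y, h i y ∂μ i := by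
  induction n with
  | zero => simp [lintegral_const]
  | succ n ih =>
    have A := measurePreserving_piFinSuccAbove μ 0
    calc ∫⁻ x : ∀ i, E i, ∏ i, h i (x i) ∂Measure.pi μ
        = ∫⁻ y : E 0 × (∀ j : Fin n, E ((0 : Fin (n+1)).succAbove j)),
            h 0 y.1 * ∏ j, h ((0 : Fin (n+1)).succAbove j) (y.2 j)
            ∂((μ 0).prod (Measure.pi fun j => μ ((0 : Fin (n+1)).succAbove j))) := by
          rw [A.lintegral_map_equiv (fun y => h 0 y.1 *
            ∏ j, h ((0 : Fin (n+1)).succAbove j) (y.2 j)) (MeasurableEquiv.piFinSuccAbove E 0)]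
          refine lintegral_congr fun x => ?_
          rw [Fin.prod_univ_succAbove (fun i => h i (x i)) 0]
          rfl
      _ = (∫⁻ y, h 0 y ∂μ 0) * ∏ j, ∫⁻ y, h ((0 : Fin (n+1)).succAbove j) y
            ∂μ ((0 : Fin (n+1)).succAbove j) := by
          rw [lintegral_prod_mul (f := h 0)
            (g := fun v : ∀ j : Fin n, E ((0 : Fin (n+1)).succAbove j) =>
              ∏ j, h ((0 : Fin (n+1)).succAbove j) (v j)) (hm 0).aemeasurable
            ((Finset.measurable_prod _ fun j _ => (hm _).comp (measurable_pi_apply j)).aemeasurable)]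
          rw [ih (fun j => μ ((0 : Fin (n+1)).succAbove j)) (fun j => h _) (fun j => hm _)]
      _ = ∏ i, ∫⁻ y, h i y ∂μ i := (Fin.prod_univ_succAbove (fun i => ∫⁻ y, h i y ∂μ i) 0).symm

theorem lintegral_pi_prod {ι : Type*} [Fintype ι] {E : ι → Type*} [∀ i, MeasurableSpace (E i)]
    (μ : ∀ i, Measure (E i)) [∀ i, SigmaFinite (μ i)] (h : ∀ i, E i → ℝ≥0∞)
    (hm : ∀ i, Measurable (h i)) :
    ∫⁻ x : ∀ i, E i, ∏ i, h i (x i) ∂Measure.pi μ = ∏ i, ∫⁻ y, h i y ∂μ i := by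
  let e := (Fintype.equivFin ι).symm
  have A := measurePreserving_piCongrLeft μ e
  rw [A.lintegral_map_equiv (fun x => ∏ i, h i (x i)) (MeasurableEquiv.piCongrLeft E e)]
  simp_rw [← e.prod_comp, MeasurableEquiv.coe_piCongrLeft, Equiv.piCongrLeft_apply_apply]
  exact lintegral_fin_prod _ _ (fun j => hm (e j))

lemma core_alg (x c N Z S C : ℝ) (hc : 0 < c) (hCpos : 0 < C) (hC2 : C ^ 2 = S ^ 2 + 1)
    (hxS : 0 < x * S) (hDp : 0 < C * Z + S * N) (hDm : 0 < C * Z - S * N) :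
    x * (c ^ 2 * (-(S / C) + (1 - c⁻¹) / (-(2 * S * C))) - (S / C + (1 - c) / (2 * S * C)))
      ≤ x * (c ^ 2 * ((C * N - S * Z) / (C * Z - S * N))
          - (C * N + S * Z) / (C * Z + S * N)) := by
  have hcne : c ≠ 0 := ne_of_gt hc
  have hCne : C ≠ 0 := ne_of_gt hCpos
  have hSne : S ≠ 0 := by
    intro h; rw [h, mul_zero] at hxS; exact lt_irrefl 0 hxS
  have hDpne : C * Z + S * N ≠ 0 := ne_of_gt hDp
  have hDmne : C * Z - S * N ≠ 0 := ne_of_gt hDm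
  have hDDne : (C * Z - S * N) * (C * Z + S * N) ≠ 0 := mul_ne_zero hDmne hDpne
  have hSCne : 2 * S * C ≠ 0 := by positivity
  have hL : c ^ 2 * (-(S / C) + (1 - c⁻¹) / (-(2 * S * C))) - (S / C + (1 - c) / (2 * S * C))
      = (-(2 * S ^ 2 * (c ^ 2 + 1) + (c - 1) ^ 2)) / (2 * S * C) := by
    field_simp
    ring
  have hR : c ^ 2 * ((C * N - S * Z) / (C * Z - S * N)) - (C * N + S * Z) / (C * Z + S * N)
      = (c ^ 2 * (C * N - S * Z) * (C * Z + S * N) - (C * N + S * Z) * (C * Z - S * N))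
        / ((C * Z - S * N) * (C * Z + S * N)) := by
    rw [mul_div_assoc', div_sub_div _ _ hDmne hDpne]
    ring
  have hnum : (c ^ 2 * (C * N - S * Z) * (C * Z + S * N) - (C * N + S * Z) * (C * Z - S * N))
        * (2 * S * C)
      - (C * Z - S * N) * (C * Z + S * N) * (-(2 * S ^ 2 * (c ^ 2 + 1) + (c - 1) ^ 2))
      = (S * N * (c + 1) + C * Z * (c - 1)) ^ 2 := by
    linear_combination (-2*S*C*N*Z + 2*S*C*c^2*N*Z + 2*S^2*N^2 + 2*S^2*c^2*N^2) * hC2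
  have hd : c ^ 2 * ((C * N - S * Z) / (C * Z - S * N)) - (C * N + S * Z) / (C * Z + S * N)
      - (c ^ 2 * (-(S / C) + (1 - c⁻¹) / (-(2 * S * C))) - (S / C + (1 - c) / (2 * S * C)))
      = (S * N * (c + 1) + C * Z * (c - 1)) ^ 2
        / ((C * Z - S * N) * (C * Z + S * N) * (2 * S * C)) := by
    rw [hL, hR, div_sub_div _ _ hDDne hSCne, hnum]
  have hpos : 0 ≤ x * ((S * N * (c + 1) + C * Z * (c - 1)) ^ 2
      / ((C * Z - S * N) * (C * Z + S * N) * (2 * S * C))) := by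
    rcases mul_pos_iff.mp hxS with ⟨hx, hS⟩ | ⟨hx, hS⟩
    · have hden : 0 < (C * Z - S * N) * (C * Z + S * N) * (2 * S * C) :=
        mul_pos (mul_pos hDm hDp) (by positivity)
      positivity
    · have hden : (C * Z - S * N) * (C * Z + S * N) * (2 * S * C) < 0 := by
        have h1 : 2 * S * C < 0 := by nlinarith
        exact mul_neg_of_pos_of_neg (mul_pos hDm hDp) h1
      have h2 : (S * N * (c + 1) + C * Z * (c - 1)) ^ 2
          / ((C * Z - S * N) * (C * Z + S * N) * (2 * S * C)) ≤ 0 :=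
        div_nonpos_of_nonneg_of_nonpos (sq_nonneg _) hden.le
      have h3 := mul_nonneg (neg_nonneg.mpr hx.le) (neg_nonneg.mpr h2)
      nlinarith [h3]
  have h6 : x * (c ^ 2 * ((C * N - S * Z) / (C * Z - S * N)) - (C * N + S * Z) / (C * Z + S * N))
      - x * (c ^ 2 * (-(S / C) + (1 - c⁻¹) / (-(2 * S * C))) - (S / C + (1 - c) / (2 * S * C)))
      = x * ((S * N * (c + 1) + C * Z * (c - 1)) ^ 2
        / ((C * Z - S * N) * (C * Z + S * N) * (2 * S * C))) := by
    rw [← hd]; ring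
  linarith [hpos, h6]

lemma core (β lamB b x Z N : ℝ) (hβ : 0 < β) (hl : 0 < lamB) (hZ : 0 < Z) (hN : |N| ≤ Z) :
    x * (Real.exp (-2 * b * x) * (Real.tanh (β * lamB * (-x)) + phiExt β lamB b (-x))
        - (Real.tanh (β * lamB * x) + phiExt β lamB b x))
      ≤ x * (Real.exp (-2 * b * x)
            * ((Real.cosh (β * lamB * x) * N - Real.sinh (β * lamB * x) * Z)
              / (Real.cosh (β * lamB * x) * Z - Real.sinh (β * lamB * x) * N))
          - (Real.cosh (β * lamB * x) * N + Real.sinh (β * lamB * x) * Z)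
            / (Real.cosh (β * lamB * x) * Z + Real.sinh (β * lamB * x) * N)) := by
  rcases eq_or_ne x 0 with rfl | hx
  · simp
  have hθ : 0 < β * lamB := mul_pos hβ hl
  have htanh : Real.tanh (β * lamB * x) = Real.sinh (β * lamB * x) / Real.cosh (β * lamB * x) :=
    Real.tanh_eq_sinh_div_cosh _
  have htanhneg : Real.tanh (β * lamB * (-x))
      = -(Real.sinh (β * lamB * x) / Real.cosh (β * lamB * x)) := by
    rw [mul_neg, Real.tanh_neg, Real.tanh_eq_sinh_div_cosh]
  have hphip : phiExt β lamB b x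
      = (1 - Real.exp (-b * x)) / (2 * Real.sinh (β * lamB * x) * Real.cosh (β * lamB * x)) := by
    unfold phiExt
    rw [if_neg hx, show 2 * β * lamB * x = 2 * (β * lamB * x) by ring, Real.sinh_two_mul]
  have hphim : phiExt β lamB b (-x)
      = (1 - (Real.exp (-b * x))⁻¹)
        / (-(2 * Real.sinh (β * lamB * x) * Real.cosh (β * lamB * x))) := by
    unfold phiExt
    rw [if_neg (neg_ne_zero.mpr hx), show -b * -x = -(-b * x) by ring, Real.exp_neg,
      show 2 * β * lamB * -x = -(2 * (β * lamB * x)) by ring, Real.sinh_neg, Real.sinh_two_mul]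
  have hc2 : Real.exp (-2 * b * x) = Real.exp (-b * x) ^ 2 := by
    rw [pow_two, ← Real.exp_add]; congr 1; ring
  rw [htanh, htanhneg, hphip, hphim, hc2]
  have hCpos : 0 < Real.cosh (β * lamB * x) := Real.cosh_pos _
  have hSC : |Real.sinh (β * lamB * x)| < Real.cosh (β * lamB * x) := by
    have h1 := Real.cosh_sq (β * lamB * x)
    have h2 : |Real.sinh (β * lamB * x)| ^ 2 < Real.cosh (β * lamB * x) ^ 2 := by
      rw [sq_abs]; nlinarith
    exact lt_of_pow_lt_pow_left₀ 2 hCpos.le h2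
  have h1 : |Real.sinh (β * lamB * x) * N| ≤ |Real.sinh (β * lamB * x)| * Z := by
    rw [abs_mul]; exact mul_le_mul_of_nonneg_left hN (abs_nonneg _)
  have h2 : |Real.sinh (β * lamB * x)| * Z < Real.cosh (β * lamB * x) * Z :=
    mul_lt_mul_of_pos_right hSC hZ
  have hDp : 0 < Real.cosh (β * lamB * x) * Z + Real.sinh (β * lamB * x) * N := by
    have := neg_abs_le (Real.sinh (β * lamB * x) * N); linarith
  have hDm : 0 < Real.cosh (β * lamB * x) * Z - Real.sinh (β * lamB * x) * N := by
    have := le_abs_self (Real.sinh (β * lamB * x) * N); linarith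
  have hxS : 0 < x * Real.sinh (β * lamB * x) := by
    rcases hx.lt_or_gt with hneg | hpos
    · have h0 : 0 < Real.sinh (-(β * lamB * x)) := by
        rw [Real.sinh_pos_iff]; nlinarith
      rw [Real.sinh_neg] at h0
      exact mul_pos_of_neg_of_neg hneg (by linarith)
    · exact mul_pos hpos (by rw [Real.sinh_pos_iff]; positivity)
  exact core_alg x (Real.exp (-b * x)) N Z (Real.sinh (β * lamB * x)) (Real.cosh (β * lamB * x))
    (Real.exp_pos _) (Real.cosh_pos _) (Real.cosh_sq _) hxS hDp hDm
/-- numerator sum -/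
noncomputable def Nfun [Fintype V] [DecidableEq V] (β : ℝ) (lam J : Finset V → ℝ)
    (B : Finset V) : ℝ :=
  ∑ σ : V → Bool, sigmaA B σ * Real.exp (energy β lam J σ)

section SpinLemmas
variable [Fintype V] [DecidableEq V]

lemma sigmaA_pm (A : Finset V) (σ : V → Bool) : sigmaA A σ = 1 ∨ sigmaA A σ = -1 := by
  classical
  unfold sigmaA
  induction A using Finset.induction_on with
  | empty => left; simp
  | @insert a s ha ih =>
    rw [Finset.prod_insert ha]
    rcases ih with h | h <;> rw [h] <;> unfold spin <;> by_cases hb : σ a = true <;>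
      simp [hb]

lemma energy_update (β : ℝ) (lam J : Finset V → ℝ) (B : Finset V) (x : ℝ) (σ : V → Bool) :
    energy β lam (Function.update J B x) σ
      = β * lam B * x * sigmaA B σ + energy β lam (Function.update J B 0) σ := by
  unfold energy
  rw [← Finset.sum_erase_add _ _ (Finset.mem_univ B), ← Finset.sum_erase_add _ _ (Finset.mem_univ B)]
  have h1 : ∀ y : ℝ, ∑ A ∈ Finset.univ.erase B, lam A * (Function.update J B y) A * sigmaA A σ
      = ∑ A ∈ Finset.univ.erase B, lam A * J A * sigmaA A σ := fun y =>
    Finset.sum_congr rfl fun A hA => by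
      rw [Function.update_of_ne (Finset.ne_of_mem_erase hA)]
  rw [h1, h1, Function.update_self, Function.update_self]
  ring

lemma exp_energy_update (β : ℝ) (lam J : Finset V → ℝ) (B : Finset V) (x : ℝ) (σ : V → Bool) :
    Real.exp (energy β lam (Function.update J B x) σ)
      = Real.cosh (β * lam B * x) * Real.exp (energy β lam (Function.update J B 0) σ)
        + Real.sinh (β * lam B * x)
          * (sigmaA B σ * Real.exp (energy β lam (Function.update J B 0) σ)) := by
  rw [energy_update, Real.exp_add]
  rcases sigmaA_pm B σ with h | h <;> rw [h]
  · have hh := Real.cosh_add_sinh (β * lam B * x)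
    rw [mul_one, ← hh]; ring
  · have hh := Real.cosh_sub_sinh (β * lam B * x)
    rw [show β * lam B * x * (-1) = -(β * lam B * x) by ring, ← hh]; ring

lemma sig_exp_energy_update (β : ℝ) (lam J : Finset V → ℝ) (B : Finset V) (x : ℝ) (σ : V → Bool) :
    sigmaA B σ * Real.exp (energy β lam (Function.update J B x) σ)
      = Real.cosh (β * lam B * x)
          * (sigmaA B σ * Real.exp (energy β lam (Function.update J B 0) σ))
        + Real.sinh (β * lam B * x) * Real.exp (energy β lam (Function.update J B 0) σ) := by
  rw [exp_energy_update β lam J B x σ]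
  rcases sigmaA_pm B σ with h | h <;> rw [h] <;> ring

lemma Zfun_update (β : ℝ) (lam J : Finset V → ℝ) (B : Finset V) (x : ℝ) :
    Zfun β lam (Function.update J B x)
      = Real.cosh (β * lam B * x) * Zfun β lam (Function.update J B 0)
        + Real.sinh (β * lam B * x) * Nfun β lam (Function.update J B 0) B := by
  unfold Zfun Nfun
  simp_rw [exp_energy_update β lam J B x]
  rw [Finset.sum_add_distrib, ← Finset.mul_sum, ← Finset.mul_sum]

lemma Nfun_update (β : ℝ) (lam J : Finset V → ℝ) (B : Finset V) (x : ℝ) :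
    Nfun β lam (Function.update J B x) B
      = Real.cosh (β * lam B * x) * Nfun β lam (Function.update J B 0) B
        + Real.sinh (β * lam B * x) * Zfun β lam (Function.update J B 0) := by
  unfold Zfun Nfun
  simp_rw [sig_exp_energy_update β lam J B x]
  rw [Finset.sum_add_distrib, ← Finset.mul_sum, ← Finset.mul_sum]

lemma corr_formula (β : ℝ) (lam J : Finset V → ℝ) (B : Finset V) :
    corr β lam J B
      = (Real.cosh (β * lam B * J B) * Nfun β lam (Function.update J B 0) B
          + Real.sinh (β * lam B * J B) * Zfun β lam (Function.update J B 0))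
        / (Real.cosh (β * lam B * J B) * Zfun β lam (Function.update J B 0)
          + Real.sinh (β * lam B * J B) * Nfun β lam (Function.update J B 0) B) := by
  have h1 := Zfun_update β lam J B (J B)
  have h2 := Nfun_update β lam J B (J B)
  rw [Function.update_eq_self] at h1 h2
  unfold corr
  rw [show (∑ σ : V → Bool, sigmaA B σ * Real.exp (energy β lam J σ)) = Nfun β lam J B from rfl,
    h1, h2]

lemma corr_flip_formula (β : ℝ) (lam J : Finset V → ℝ) (B : Finset V) :
    corr β lam (flipJ B J) B
      = (Real.cosh (β * lam B * J B) * Nfun β lam (Function.update J B 0) B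
          - Real.sinh (β * lam B * J B) * Zfun β lam (Function.update J B 0))
        / (Real.cosh (β * lam B * J B) * Zfun β lam (Function.update J B 0)
          - Real.sinh (β * lam B * J B) * Nfun β lam (Function.update J B 0) B) := by
  have h1 := Zfun_update β lam J B (-(J B))
  have h2 := Nfun_update β lam J B (-(J B))
  rw [mul_neg, Real.cosh_neg, Real.sinh_neg] at h1 h2
  unfold corr flipJ
  rw [show (∑ σ : V → Bool, sigmaA B σ
      * Real.exp (energy β lam (Function.update J B (-(J B))) σ))
      = Nfun β lam (Function.update J B (-(J B))) B from rfl, h1, h2]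
  ring_nf

lemma Zfun_pos (β : ℝ) (lam J : Finset V → ℝ) : 0 < Zfun β lam J :=
  Finset.sum_pos (fun σ _ => Real.exp_pos _) Finset.univ_nonempty

lemma Nfun_abs_le (β : ℝ) (lam J : Finset V → ℝ) (B : Finset V) :
    |Nfun β lam J B| ≤ Zfun β lam J := by
  unfold Nfun Zfun
  refine (Finset.abs_sum_le_sum_abs _ _).trans ?_
  refine Finset.sum_le_sum fun σ _ => ?_
  have hs : |sigmaA B σ| = 1 := by
    rcases sigmaA_pm B σ with h | h <;> rw [h] <;> norm_num
  rw [abs_mul, hs, one_mul, abs_of_pos (Real.exp_pos _)]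

end SpinLemmas
section MeasurePart
variable [Fintype V] [DecidableEq V]

lemma measurable_flipJ (B : Finset V) :
    Measurable (flipJ B : (Finset V → ℝ) → (Finset V → ℝ)) := by
  apply measurable_pi_lambda
  intro A
  by_cases hA : A = B
  · subst hA
    simp only [flipJ, Function.update_self]
    exact (measurable_pi_apply A).neg
  · simp only [flipJ, Function.update_of_ne hA]
    exact measurable_pi_apply A

lemma flipJ_flipJ (B : Finset V) (J : Finset V → ℝ) : flipJ B (flipJ B J) = J := by
  unfold flipJ
  rw [Function.update_self, neg_neg, Function.update_idem, Function.update_eq_self]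

lemma pi_map_flip (P : Finset V → Measure ℝ) [∀ A, IsProbabilityMeasure (P A)]
    (B : Finset V) (b : ℝ) (hPB : densityRatio (P B) b) :
    (Measure.pi P).map (flipJ B)
      = (Measure.pi P).withDensity (fun J => ENNReal.ofReal (Real.exp (-2 * b * J B))) := by
  classical
  have hflip : Measurable (flipJ B : (Finset V → ℝ) → _) := measurable_flipJ B
  set Q : Finset V → Measure ℝ := fun A => if A = B then (P B).map (fun x => -x) else P A with hQ
  have hQinst : ∀ A, IsProbabilityMeasure (Q A) := by
    intro A
    rw [hQ]; dsimp only
    split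
    · exact Measure.isProbabilityMeasure_map measurable_neg.aemeasurable
    · infer_instance
  haveI : ∀ A, IsProbabilityMeasure (Q A) := hQinst
  have h1 : (Measure.pi P).map (flipJ B) = Measure.pi Q := by
    refine (Measure.pi_eq (μ := Q) fun s hs => ?_).symm
    rw [Measure.map_apply hflip (MeasurableSet.univ_pi hs)]
    have hpre : flipJ B ⁻¹' Set.pi Set.univ s
        = Set.pi Set.univ (fun A => if A = B then (fun x : ℝ => -x) ⁻¹' s B else s A) := by
      ext J
      simp only [Set.mem_preimage, Set.mem_pi, Set.mem_univ, true_implies]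
      refine forall_congr' fun A => ?_
      by_cases hA : A = B
      · subst hA
        simp [flipJ, Function.update_self]
      · simp [flipJ, Function.update_of_ne hA, hA]
    rw [hpre, Measure.pi_pi]
    refine Finset.prod_congr rfl fun A _ => ?_
    by_cases hA : A = B
    · subst hA
      rw [if_pos rfl, hQ]; dsimp only
      rw [if_pos rfl, Measure.map_apply measurable_neg (hs A)]
    · rw [if_neg hA, hQ]; dsimp only
      rw [if_neg hA]
  have h2 : (Measure.pi P).withDensity (fun J => ENNReal.ofReal (Real.exp (-2 * b * J B)))
      = Measure.pi Q := by
    refine (Measure.pi_eq (μ := Q) fun s hs => ?_).symm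
    set g : Finset V → ℝ → ℝ≥0∞ :=
      fun A x => if A = B then ENNReal.ofReal (Real.exp (-2 * b * x)) else 1 with hg
    have hgm : ∀ A, Measurable (g A) := by
      intro A
      rw [hg]; dsimp only
      split
      · exact ((measurable_id.const_mul (-2 * b)).exp).ennreal_ofReal
      · exact measurable_const
    have hker : ∀ J : Finset V → ℝ,
        Set.indicator (Set.pi Set.univ s)
          (fun J : Finset V → ℝ => ENNReal.ofReal (Real.exp (-2 * b * J B))) J
        = ∏ A, Set.indicator (s A) (g A) (J A) := by
      intro J
      by_cases hJ : J ∈ Set.pi Set.univ s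
      · rw [Set.indicator_of_mem hJ]
        rw [Finset.prod_congr rfl (fun A _ =>
          Set.indicator_of_mem (Set.mem_univ_pi.mp hJ A) (g A))]
        rw [Finset.prod_eq_single B (fun A _ hA => by rw [hg]; exact if_neg hA)
          (fun hB => absurd (Finset.mem_univ B) hB)]
        simp [hg]
      · rw [Set.indicator_of_notMem hJ]
        obtain ⟨A, hA⟩ : ∃ A, J A ∉ s A := by
          by_contra hcon
          push_neg at hcon
          exact hJ (Set.mem_univ_pi.mpr hcon)
        rw [eq_comm]
        exact Finset.prod_eq_zero (Finset.mem_univ A) (Set.indicator_of_notMem hA _)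
    rw [withDensity_apply _ (MeasurableSet.univ_pi hs),
      ← lintegral_indicator (MeasurableSet.univ_pi hs) _, lintegral_congr hker,
      lintegral_pi_prod P _ (fun A => (hgm A).indicator (hs A))]
    refine Finset.prod_congr rfl fun A _ => ?_
    by_cases hA : A = B
    · subst hA
      have hgB : g A = fun x => ENNReal.ofReal (Real.exp (-2 * b * x)) := by
        funext x; rw [hg]; exact if_pos rfl
      rw [hgB, lintegral_indicator (hs A) _, ← withDensity_apply _ (hs A), ← hPB, hQ]
      dsimp only
      rw [if_pos rfl]
    · have hgA : g A = fun _ => (1 : ℝ≥0∞) := by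
        funext x; rw [hg]; exact if_neg hA
      rw [hgA, lintegral_indicator (hs A) _, setLIntegral_one, hQ]
      dsimp only
      rw [if_neg hA]
  rw [h1, h2]

end MeasurePart

section Pointwise
variable [Fintype V] [DecidableEq V]

lemma pointwise_key (β : ℝ) (hβ : 0 < β) (lam : Finset V → ℝ) (B : Finset V)
    (hlamB : 0 < lam B) (b : ℝ) (f : (Finset V → ℝ) → ℝ) (hf0 : ∀ J, 0 ≤ f J)
    (hfflip : ∀ J, f (flipJ B J) = f J) (J : Finset V → ℝ) :
    -(f J) * J B * (Real.tanh (β * lam B * J B) + phiExt β (lam B) b (J B))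
      + Real.exp (-2 * b * J B) * (-(f (flipJ B J)) * (flipJ B J) B
        * (Real.tanh (β * lam B * (flipJ B J) B) + phiExt β (lam B) b ((flipJ B J) B)))
    ≤ -(f J) * J B * corr β lam J B
      + Real.exp (-2 * b * J B)
        * (-(f (flipJ B J)) * (flipJ B J) B * corr β lam (flipJ B J) B) := by
  have hxB : (flipJ B J) B = -(J B) := by
    unfold flipJ; rw [Function.update_self]
  rw [hfflip J, corr_formula β lam J B, corr_flip_formula β lam J B, hxB]
  have hcore := core β (lam B) b (J B) (Zfun β lam (Function.update J B 0))
    (Nfun β lam (Function.update J B 0) B) hβ hlamB (Zfun_pos β lam _)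
    (Nfun_abs_le β lam _ B)
  have hmul := mul_le_mul_of_nonneg_left hcore (hf0 J)
  nlinarith [hmul]

end Pointwise

/-- Weighted local-energy inequality (Eq. (15)). -/
theorem weighted_local_energy_inequality [Fintype V] [DecidableEq V]
    (β : ℝ) (hβ : 0 < β) (lam : Finset V → ℝ)
    (P : Finset V → Measure ℝ) [∀ A, IsProbabilityMeasure (P A)]
    (B : Finset V) (hlamB : 0 < lam B) (b : ℝ) (hPB : densityRatio (P B) b)
    (f : (Finset V → ℝ) → ℝ) (hf : Measurable f)
    (hf0 : ∀ J, 0 ≤ f J)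
    (hfflip : ∀ J, f (flipJ B J) = f J)
    (hint1 : Integrable (fun J => -(f J) * J B * corr β lam J B) (Measure.pi P))
    (hint2 : Integrable (fun J => -(f J) * J B *
      (Real.tanh (β * lam B * J B) + phiExt β (lam B) b (J B))) (Measure.pi P)) :
    ∫ J, -(f J) * J B *
        (Real.tanh (β * lam B * J B) + phiExt β (lam B) b (J B)) ∂(Measure.pi P) ≤
      ∫ J, -(f J) * J B * corr β lam J B ∂(Measure.pi P) := by
  classical
  set T : (Finset V → ℝ) → ℝ := fun J => -(f J) * J B *
    (Real.tanh (β * lam B * J B) + phiExt β (lam B) b (J B)) with hTdef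
  set G : (Finset V → ℝ) → ℝ := fun J => -(f J) * J B * corr β lam J B with hGdef
  have hff : ∀ J : Finset V → ℝ, flipJ B (flipJ B J) = J := flipJ_flipJ B
  let e : (Finset V → ℝ) ≃ᵐ (Finset V → ℝ) :=
    ⟨⟨flipJ B, flipJ B, hff, hff⟩, measurable_flipJ B, measurable_flipJ B⟩
  have hcoe : ⇑e = flipJ B := rfl
  have hmap : (Measure.pi P).map (flipJ B)
      = (Measure.pi P).withDensity (fun J => ENNReal.ofReal (Real.exp (-2 * b * J B))) :=
    pi_map_flip P B b hPB
  set ρ : (Finset V → ℝ) → NNReal := fun J => Real.toNNReal (Real.exp (-2 * b * J B)) with hρdef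
  have hρmeas : Measurable ρ := (Measurable.exp (by fun_prop : Measurable fun J : Finset V → ℝ => -2 * b * J B)).real_toNNReal
  have hdens : (fun J : Finset V → ℝ => ENNReal.ofReal (Real.exp (-2 * b * J B)))
      = fun J => (ρ J : ℝ≥0∞) := rfl
  have hcoeρ : ∀ J : Finset V → ℝ, (ρ J : ℝ) = Real.exp (-2 * b * J B) := fun J =>
    Real.coe_toNNReal _ (Real.exp_pos _).le
  have star : ∀ F : (Finset V → ℝ) → ℝ,
      ∫ J, F (flipJ B J) ∂(Measure.pi P)
        = ∫ J, Real.exp (-2 * b * J B) * F J ∂(Measure.pi P) := by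
    intro F
    have h1 : ∫ J, F J ∂((Measure.pi P).map e) = ∫ J, F (e J) ∂(Measure.pi P) :=
      integral_map_equiv e F
    rw [hcoe] at h1
    rw [← h1, hmap, hdens, integral_withDensity_eq_integral_smul hρmeas]
    congr 1
    funext J
    rw [NNReal.smul_def, hcoeρ J, smul_eq_mul]
  have htrans : ∀ F : (Finset V → ℝ) → ℝ, Integrable F (Measure.pi P) →
      Integrable (fun J => Real.exp (-2 * b * J B) * F (flipJ B J)) (Measure.pi P) := by
    intro F hF
    have h0 : Integrable (fun J => F (flipJ B J)) ((Measure.pi P).map e) := by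
      rw [integrable_map_equiv]
      have hco : ((fun J => F (flipJ B J)) ∘ ⇑e) = F := by
        funext J
        simp only [Function.comp_apply, hcoe, hff]
      rw [hco]
      exact hF
    rw [hcoe, hmap, hdens] at h0
    have h1 := (integrable_withDensity_iff_integrable_smul hρmeas).mp h0
    refine h1.congr (Filter.Eventually.of_forall fun J => ?_)
    dsimp only
    rw [NNReal.smul_def, hcoeρ J, smul_eq_mul]
  have hT2 : Integrable (fun J => Real.exp (-2 * b * J B) * T (flipJ B J)) (Measure.pi P) :=
    htrans T hint2
  have hG2 : Integrable (fun J => Real.exp (-2 * b * J B) * G (flipJ B J)) (Measure.pi P) :=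
    htrans G hint1
  have hstarT : ∫ J, Real.exp (-2 * b * J B) * T (flipJ B J) ∂(Measure.pi P)
      = ∫ J, T J ∂(Measure.pi P) := by
    have h := star (fun J => T (flipJ B J))
    simp only [hff] at h
    exact h.symm
  have hstarG : ∫ J, Real.exp (-2 * b * J B) * G (flipJ B J) ∂(Measure.pi P)
      = ∫ J, G J ∂(Measure.pi P) := by
    have h := star (fun J => G (flipJ B J))
    simp only [hff] at h
    exact h.symm
  have hpt : ∀ J, T J + Real.exp (-2 * b * J B) * T (flipJ B J)
      ≤ G J + Real.exp (-2 * b * J B) * G (flipJ B J) := by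
    intro J
    exact pointwise_key β hβ lam B hlamB b f hf0 hfflip J
  have hmono : ∫ J, (T J + Real.exp (-2 * b * J B) * T (flipJ B J)) ∂(Measure.pi P)
      ≤ ∫ J, (G J + Real.exp (-2 * b * J B) * G (flipJ B J)) ∂(Measure.pi P) :=
    integral_mono (hint2.add hT2) (hint1.add hG2) hpt
  rw [integral_add hint2 hT2, integral_add hint1 hG2, hstarT, hstarG] at hmono
  linarith
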